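/- Let T be a tree (finite connected acyclic simple graph) and k ≥ 1. Then every minimal monomial generator u of the ideal NI(T)^{[k]} can be written as u = ∏_{F ∈ M} ∏_{v ∈ F} x_v for some k-matching M of 𝒩(T), and this k-matching M is uniquely determined by u. -/

import Mathlib

open scoped Classical
open SimpleGraph Finset MvPolynomial

variable {V : Type*}

/-- The closed neighborhood `N_G[u]` of a vertex, as a finite set. -/
noncomputable def closedNbhd [Fintype V] (G : SimpleGraph V) (u : V) : Finset V :=
  insert u (G.neighborFinset u)

/-- `F` is a facet of the closed neighborhood complex `𝒩(G)`:
`F = N_G[u]` for some vertex `u`, and no closed neighborhood of another vertex is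
contained in `N_G[u]`. -/
def IsNFacet [Fintype V] (G : SimpleGraph V) (F : Finset V) : Prop :=
  ∃ u : V, F = closedNbhd G u ∧
    ∀ v : V, v ≠ u → ¬ closedNbhd G v ⊆ closedNbhd G u

/-- A `k`-matching of `𝒩(G)`: a set of `k` pairwise disjoint facets of `𝒩(G)`. -/
def IsNMatching [Fintype V] (G : SimpleGraph V) (k : ℕ) (M : Finset (Finset V)) : Prop :=
  M.card = k ∧ (∀ F ∈ M, IsNFacet G F) ∧
    ∀ F ∈ M, ∀ F' ∈ M, F ≠ F' → Disjoint F F'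

/-! ### Graph lemmas about trees -/

section TreeLemmas

variable {G : SimpleGraph V}

lemma dist_lt_of_mem_support (hc : G.Connected) {r u w : V} {p : G.Walk r w}
    (hp : u ∈ p.support) (hne : u ≠ w) : G.dist r u < p.length := by
  have h1 : G.dist r u ≤ (p.takeUntil u hp).length := SimpleGraph.dist_le _
  have h2 : (p.takeUntil u hp).length + (p.dropUntil u hp).length = p.length := by
    have h := congrArg SimpleGraph.Walk.length (p.take_spec hp)
    rwa [SimpleGraph.Walk.length_append] at h
  have h3 : (p.dropUntil u hp).length ≠ 0 := fun h0 =>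
    hne (SimpleGraph.Walk.eq_of_length_eq_zero h0)
  omega

lemma dist_ne_of_adj (hT : G.IsTree) {r u v : V} (h : G.Adj u v) :
    G.dist r u ≠ G.dist r v := by
  intro hd
  obtain ⟨p, hp, hpl⟩ := (hT.isConnected r u).exists_path_of_dist
  obtain ⟨q, hq, hql⟩ := (hT.isConnected r v).exists_path_of_dist
  have hvp : v ∉ p.support := by
    intro hv
    have := dist_lt_of_mem_support hT.isConnected hv h.ne'
    omega
  have hw1 : (p.concat h).IsPath := by
    rw [SimpleGraph.Walk.isPath_def, SimpleGraph.Walk.support_concat,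
      List.nodup_append]
    exact ⟨hp.support_nodup, List.nodup_singleton _, by simpa using fun a (ha : a ∈ p.support) (hav : a = v) => hvp (hav ▸ ha)⟩
  have := (hT.existsUnique_path r v).unique hw1 hq
  have := congrArg SimpleGraph.Walk.length this
  rw [SimpleGraph.Walk.length_concat, hpl, hql] at this
  omega

lemma adj_dist_cases (hT : G.IsTree) {r u v : V} (h : G.Adj u v) :
    G.dist r v = G.dist r u + 1 ∨ G.dist r u = G.dist r v + 1 := by
  have h1 : G.dist r v ≤ G.dist r u + 1 := by
    refine le_trans (hT.isConnected.dist_triangle (v := u)) ?_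
    have : G.dist u v ≤ 1 := by
      simpa using SimpleGraph.dist_le (SimpleGraph.Walk.cons h SimpleGraph.Walk.nil)
    omega
  have h2 : G.dist r u ≤ G.dist r v + 1 := by
    refine le_trans (hT.isConnected.dist_triangle (v := v)) ?_
    have : G.dist v u ≤ 1 := by
      simpa using SimpleGraph.dist_le (SimpleGraph.Walk.cons h.symm SimpleGraph.Walk.nil)
    omega
  have := dist_ne_of_adj hT (r := r) h
  omega

lemma unique_parent (hT : G.IsTree) {r x y c : V} (hx : G.Adj x c) (hy : G.Adj y c)
    (hdx : G.dist r x + 1 = G.dist r c) (hdy : G.dist r y + 1 = G.dist r c) : x = y := by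
  obtain ⟨p, hp, hpl⟩ := (hT.isConnected r x).exists_path_of_dist
  obtain ⟨q, hq, hql⟩ := (hT.isConnected r y).exists_path_of_dist
  have hcp : c ∉ p.support := by
    intro hc
    rcases eq_or_ne c x with rfl | hne
    · omega
    · have := dist_lt_of_mem_support hT.isConnected hc hne
      omega
  have hcq : c ∉ q.support := by
    intro hc
    rcases eq_or_ne c y with rfl | hne
    · omega
    · have := dist_lt_of_mem_support hT.isConnected hc hne
      omega
  have hw1 : (p.concat hx).IsPath := by
    rw [SimpleGraph.Walk.isPath_def, SimpleGraph.Walk.support_concat,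
      List.nodup_append]
    exact ⟨hp.support_nodup, List.nodup_singleton _, by simpa using fun a (ha : a ∈ p.support) (hav : a = c) => hcp (hav ▸ ha)⟩
  have hw2 : (q.concat hy).IsPath := by
    rw [SimpleGraph.Walk.isPath_def, SimpleGraph.Walk.support_concat,
      List.nodup_append]
    exact ⟨hq.support_nodup, List.nodup_singleton _, by simpa using fun a (ha : a ∈ q.support) (hav : a = c) => hcq (hav ▸ ha)⟩
  have heq := (hT.existsUnique_path r c).unique hw1 hw2
  obtain ⟨hv, -⟩ := SimpleGraph.Walk.concat_inj heq
  exact hv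

end TreeLemmas

/-! ### Monomial helpers -/

open scoped Pointwise

section MonHelpers

variable {K : Type*} [Field K]

/-- Indicator finsupp of a finset. -/
noncomputable def indF (F : Finset V) : V →₀ ℕ := ∑ v ∈ F, Finsupp.single v 1

lemma indF_apply (F : Finset V) (x : V) : indF F x = if x ∈ F then 1 else 0 := by
  classical
  rw [indF, Finsupp.finset_sum_apply]
  simp [Finsupp.single_apply]

lemma indF_le_one (F : Finset V) (x : V) : indF F x ≤ 1 := by
  rw [indF_apply]; split <;> omega

lemma indF_insert {a : V} {s : Finset V} (h : a ∉ s) :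
    indF (insert a s) = Finsupp.single a 1 + indF s := by
  rw [indF, indF, Finset.sum_insert h]

lemma X_eq_monomial (a : V) : (X a : MvPolynomial V K) = monomial (Finsupp.single a 1) 1 := rfl

lemma prodX_eq_monomial (F : Finset V) :
    (∏ v ∈ F, (X v : MvPolynomial V K)) = monomial (indF F) 1 := by
  classical
  induction F using Finset.induction_on with
  | empty => simp [indF]
  | insert _ _ h ih =>
    rw [Finset.prod_insert h, ih, indF_insert h, X_eq_monomial, monomial_mul, one_mul]

lemma prod_monomial_one {A : Type*} (s : Finset A) (f : A → (V →₀ ℕ)) :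
    (∏ a ∈ s, (monomial (f a) (1 : K))) = monomial (∑ a ∈ s, f a) 1 := by
  classical
  induction s using Finset.induction_on with
  | empty => simp
  | insert _ _ h ih =>
    rw [Finset.prod_insert h, ih, Finset.sum_insert h, monomial_mul, one_mul]

lemma monomial_dvd_monomial {e d : V →₀ ℕ} (h : e ≤ d) :
    (monomial e (1 : K)) ∣ monomial d 1 := by
  refine ⟨monomial (d - e) 1, ?_⟩
  rw [monomial_mul, one_mul, add_tsub_cancel_of_le h]

lemma dvd_of_monomial_mem_span {S : Set (MvPolynomial V K)}
    (hS : ∀ q ∈ S, ∃ e : V →₀ ℕ, q = monomial e 1) {d : V →₀ ℕ}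
    (hmem : (monomial d 1 : MvPolynomial V K) ∈ Ideal.span S) :
    ∃ e : V →₀ ℕ, e ≤ d ∧ (monomial e 1 : MvPolynomial V K) ∈ S := by
  rw [Ideal.span, Submodule.mem_span_set] at hmem
  obtain ⟨c, hsupp, hsum⟩ := hmem
  have h1 : coeff d (c.sum fun mi r => r • mi) = 1 := by
    rw [hsum, coeff_monomial, if_pos rfl]
  have hex : ∃ q ∈ c.support, coeff d (c q • q) ≠ 0 := by
    by_contra hcon
    push_neg at hcon
    rw [Finsupp.sum, coeff_sum] at h1
    rw [Finset.sum_eq_zero hcon] at h1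
    exact one_ne_zero h1.symm
  obtain ⟨q, hq, hne⟩ := hex
  obtain ⟨e, rfl⟩ := hS q (hsupp hq)
  rw [smul_eq_mul, coeff_mul_monomial'] at hne
  have he : e ≤ d := by
    by_contra hle
    rw [if_neg hle] at hne
    exact hne rfl
  exact ⟨e, he, hsupp hq⟩

lemma span_pow_eq (S : Set (MvPolynomial V K)) (k : ℕ) :
    (Ideal.span S) ^ k = Ideal.span (S ^ k) := by
  induction k with
  | zero =>
    rw [pow_zero, pow_zero, Ideal.one_eq_top]
    rw [show (1 : Set (MvPolynomial V K)) = {1} from rfl, Ideal.span_singleton_one]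
  | succ n ih =>
    rw [pow_succ, ih, Ideal.span_mul_span', ← pow_succ]

end MonHelpers

/-! ### Facets, matchings, and uniqueness for trees -/

section Facets

variable [Fintype V] {G : SimpleGraph V}

lemma mem_closedNbhd {u x : V} : x ∈ closedNbhd G u ↔ x = u ∨ G.Adj u x := by
  simp [closedNbhd, SimpleGraph.mem_neighborFinset]

lemma self_mem_closedNbhd (u : V) : u ∈ closedNbhd G u := mem_closedNbhd.2 (Or.inl rfl)

lemma sum_indF_apply (M : Finset (Finset V)) (x : V) :
    (∑ F ∈ M, indF F) x = ∑ F ∈ M, indF F x :=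
  Finsupp.finset_sum_apply M indF x

lemma sum_indF_ne_zero_iff (M : Finset (Finset V)) (x : V) :
    (∑ F ∈ M, indF F) x ≠ 0 ↔ ∃ F ∈ M, x ∈ F := by
  rw [sum_indF_apply]
  constructor
  · intro h
    by_contra hcon
    push_neg at hcon
    refine h (Finset.sum_eq_zero fun F hF => ?_)
    rw [indF_apply, if_neg (hcon F hF)]
  · rintro ⟨F, hF, hx⟩ h
    have h0 := (Finset.sum_eq_zero_iff).1 h F hF
    rw [indF_apply, if_pos hx] at h0
    exact one_ne_zero h0

lemma common_facet (hT : G.IsTree) (r : V) {M M' : Finset (Finset V)}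
    (hM' : ∀ F ∈ M', IsNFacet G F)
    (hd' : ∀ F ∈ M', ∀ F'' ∈ M', F ≠ F'' → Disjoint F F'')
    (hsum : (∑ F ∈ M, indF F) = ∑ F ∈ M', indF F)
    {u : V} (huP : ∀ v : V, v ≠ u → ¬ closedNbhd G v ⊆ closedNbhd G u)
    (huM : closedNbhd G u ∈ M)
    (hmax : ∀ w : V, (∀ v : V, v ≠ w → ¬ closedNbhd G v ⊆ closedNbhd G w) →
      closedNbhd G w ∈ M ∪ M' → G.dist r w ≤ G.dist r u) :
    closedNbhd G u ∈ M' := by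
  have cover : ∀ x : V, x ∈ closedNbhd G u →
      ∃ w : V, (∀ v : V, v ≠ w → ¬ closedNbhd G v ⊆ closedNbhd G w) ∧
        closedNbhd G w ∈ M' ∧ x ∈ closedNbhd G w := by
    intro x hx
    have h1 : (∑ F ∈ M, indF F) x ≠ 0 :=
      (sum_indF_ne_zero_iff M x).2 ⟨_, huM, hx⟩
    rw [hsum] at h1
    obtain ⟨F, hF, hxF⟩ := (sum_indF_ne_zero_iff M' x).1 h1
    obtain ⟨w, rfl, hwP⟩ := hM' F hF
    exact ⟨w, hwP, hF, hxF⟩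
  obtain ⟨v, hvP, hvM', huv⟩ := cover u (self_mem_closedNbhd u)
  rcases mem_closedNbhd.1 huv with rfl | hadj
  · exact hvM'
  -- hadj : G.Adj v u
  exfalso
  have hvne : v ≠ u := hadj.ne
  have hdv : G.dist r v ≤ G.dist r u := hmax v hvP (Finset.mem_union_right _ hvM')
  have hdu : G.dist r u = G.dist r v + 1 := by
    rcases adj_dist_cases hT (r := r) hadj with h | h <;> omega
  have hnbr : ∀ c : V, G.Adj u c → c = v := by
    intro c hc
    by_contra hcv
    rcases adj_dist_cases hT (r := r) hc with hc1 | hc2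
    · -- hc1 : dist r c = dist r u + 1
      have hcU : c ∈ closedNbhd G u := mem_closedNbhd.2 (Or.inr hc)
      obtain ⟨w, hwP, hwM', hcw⟩ := cover c hcU
      have hwle : G.dist r w ≤ G.dist r u := hmax w hwP (Finset.mem_union_right _ hwM')
      rcases mem_closedNbhd.1 hcw with rfl | hadj2
      · omega
      · rcases adj_dist_cases hT (r := r) hadj2 with h1 | h2
        · -- h1 : dist r c = dist r w + 1
          rcases eq_or_ne w u with rfl | hwu
          · -- closedNbhd G w = closedNbhd G u ∈ M', u in it and in N[v]
            rcases eq_or_ne (closedNbhd G w) (closedNbhd G v) with heq | hne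
            · exact huP v hvne (le_of_eq heq.symm)
            · exact (Finset.disjoint_left.1 (hd' _ hwM' _ hvM' hne)
                (self_mem_closedNbhd w) huv).elim
          · exact hwu (unique_parent hT (r := r) hadj2 hc (by omega) (by omega))
        · omega
    · -- hc2 : dist r u = dist r c + 1
      exact hcv (unique_parent hT (r := r) hc.symm hadj (by omega) (by omega))
  have hsub : closedNbhd G u ⊆ closedNbhd G v := by
    intro x hx
    rcases mem_closedNbhd.1 hx with rfl | hadj2
    · exact huv
    · rw [hnbr x hadj2]
      exact self_mem_closedNbhd v
  exact hvP u hvne.symm hsub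

lemma matchings_eq (hT : G.IsTree) :
    ∀ (k : ℕ) (M M' : Finset (Finset V)), IsNMatching G k M → IsNMatching G k M' →
      (∑ F ∈ M, indF F) = (∑ F ∈ M', indF F) → M = M' := by
  intro k
  induction k with
  | zero =>
    intro M M' hM hM' _
    rw [Finset.card_eq_zero.1 hM.1, Finset.card_eq_zero.1 hM'.1]
  | succ n ih =>
    intro M M' hM hM' hsum
    have hr : Nonempty V := hT.isConnected.nonempty
    obtain ⟨r⟩ := hr
    -- candidate centers
    set C : Finset V := Finset.univ.filter (fun w =>
      (∀ v : V, v ≠ w → ¬ closedNbhd G v ⊆ closedNbhd G w) ∧ closedNbhd G w ∈ M ∪ M') with hC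
    have hCne : C.Nonempty := by
      have : M.Nonempty := Finset.card_pos.1 (hM.1 ▸ Nat.succ_pos n)
      obtain ⟨F, hF⟩ := this
      obtain ⟨u0, rfl, hu0⟩ := hM.2.1 F hF
      exact ⟨u0, Finset.mem_filter.2 ⟨Finset.mem_univ _, hu0, Finset.mem_union_left _ hF⟩⟩
    obtain ⟨u, huC, humax⟩ := Finset.exists_max_image C (fun w => G.dist r w) hCne
    rw [hC, Finset.mem_filter] at huC
    obtain ⟨-, huP, huMM'⟩ := huC
    have hmax : ∀ w : V, (∀ v : V, v ≠ w → ¬ closedNbhd G v ⊆ closedNbhd G w) →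
        closedNbhd G w ∈ M ∪ M' → G.dist r w ≤ G.dist r u := by
      intro w h1 h2
      exact humax w (Finset.mem_filter.2 ⟨Finset.mem_univ _, h1, h2⟩)
    have hboth : closedNbhd G u ∈ M ∧ closedNbhd G u ∈ M' := by
      rcases Finset.mem_union.1 huMM' with h | h
      · exact ⟨h, common_facet hT r hM'.2.1 hM'.2.2 hsum huP h hmax⟩
      · refine ⟨?_, h⟩
        refine common_facet hT r hM.2.1 hM.2.2 hsum.symm huP h ?_
        intro w h1 h2
        exact hmax w h1 (by rwa [Finset.union_comm])
    obtain ⟨h1, h2⟩ := hboth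
    set F0 := closedNbhd G u
    have hsum' : (∑ F ∈ M.erase F0, indF F) = ∑ F ∈ M'.erase F0, indF F := by
      have e1 : indF F0 + ∑ F ∈ M.erase F0, indF F = ∑ F ∈ M, indF F :=
        Finset.add_sum_erase M indF h1
      have e2 : indF F0 + ∑ F ∈ M'.erase F0, indF F = ∑ F ∈ M', indF F :=
        Finset.add_sum_erase M' indF h2
      have := e1.trans (hsum.trans e2.symm)
      exact add_left_cancel this
    have hMe : IsNMatching G n (M.erase F0) :=
      ⟨by rw [Finset.card_erase_of_mem h1, hM.1]; rfl,
       fun F hF => hM.2.1 F (Finset.mem_of_mem_erase hF),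
       fun F hF F' hF' hne => hM.2.2 F (Finset.mem_of_mem_erase hF) F'
         (Finset.mem_of_mem_erase hF') hne⟩
    have hMe' : IsNMatching G n (M'.erase F0) :=
      ⟨by rw [Finset.card_erase_of_mem h2, hM'.1]; rfl,
       fun F hF => hM'.2.1 F (Finset.mem_of_mem_erase hF),
       fun F hF F' hF' hne => hM'.2.2 F (Finset.mem_of_mem_erase hF) F'
         (Finset.mem_of_mem_erase hF') hne⟩
    have := ih (M.erase F0) (M'.erase F0) hMe hMe' hsum'
    rw [← Finset.insert_erase h1, ← Finset.insert_erase h2, this]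

end Facets

/-- The closed neighborhood ideal `NI(G)`, generated by the squarefree monomials
`∏_{v ∈ F} x_v` over the facets `F` of `𝒩(G)`. -/
noncomputable def NIdeal [Fintype V] (K : Type*) [Field K] (G : SimpleGraph V) :
    Ideal (MvPolynomial V K) :=
  Ideal.span {p | ∃ F : Finset V, IsNFacet G F ∧ p = ∏ v ∈ F, X v}

/-- The `k`-th squarefree power `I^{[k]}` of an ideal: the ideal generated by all
squarefree monomials contained in `I ^ k`. -/
noncomputable def sqfreePow {K : Type*} [Field K] (I : Ideal (MvPolynomial V K)) (k : ℕ) :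
    Ideal (MvPolynomial V K) :=
  Ideal.span {p | (∃ F : Finset V, p = ∏ v ∈ F, X v) ∧ p ∈ I ^ k}

/-- `p` is a minimal monomial generator of the monomial ideal `I`:
`p` is a monic monomial belonging to `I` but not to `𝔪 · I`, where `𝔪` is the ideal
generated by all the variables. -/
def IsMinMonGen {K : Type*} [Field K] (I : Ideal (MvPolynomial V K))
    (p : MvPolynomial V K) : Prop :=
  (∃ d : V →₀ ℕ, p = monomial d 1) ∧ p ∈ I ∧
    p ∉ Ideal.span (Set.range (X : V → MvPolynomial V K)) * I

section Main

open scoped Pointwise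

variable [Fintype V] {K : Type*} [Field K] {G : SimpleGraph V}

lemma mem_facetSet_pow {k : ℕ} {q : MvPolynomial V K}
    (hq : q ∈ ({p : MvPolynomial V K | ∃ F : Finset V, IsNFacet G F ∧ p = ∏ v ∈ F, X v}) ^ k) :
    ∃ l : Multiset (Finset V), l.card = k ∧ (∀ F ∈ l, IsNFacet G F) ∧
      q = monomial (l.map indF).sum 1 := by
  induction k generalizing q with
  | zero =>
    rw [pow_zero, Set.mem_one] at hq
    exact ⟨0, rfl, by simp, by simp [hq]⟩
  | succ n ih =>
    rw [pow_succ, Set.mem_mul] at hq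
    obtain ⟨a, ha, b, hb, rfl⟩ := hq
    obtain ⟨l, hcard, hfac, rfl⟩ := ih ha
    obtain ⟨F, hF, rfl⟩ := hb
    refine ⟨F ::ₘ l, by simp [hcard], ?_, ?_⟩
    · intro F' hF'
      rcases Multiset.mem_cons.1 hF' with rfl | h
      · exact hF
      · exact hfac _ h
    · rw [prodX_eq_monomial, monomial_mul, one_mul]
      congr 1
      rw [Multiset.map_cons, Multiset.sum_cons, add_comm]

lemma multiset_sum_apply (s : Multiset (V →₀ ℕ)) (x : V) :
    s.sum x = (s.map fun f => f x).sum := by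
  refine Multiset.induction_on s (by simp) ?_
  intro a t ih
  simp [ih]

end Main

/-- Corollary 3.5: every minimal monomial generator of `NI(T)^{[k]}`, for `T` a tree, is
`∏_{F ∈ M} ∏_{v ∈ F} x_v` for a unique `k`-matching `M` of `𝒩(T)`. -/
theorem minMonGen_sqfreePow_eq_unique_matching
    [Fintype V] (K : Type*) [Field K] (G : SimpleGraph V) (hT : G.IsTree)
    (k : ℕ) (hk : 1 ≤ k) (p : MvPolynomial V K)
    (hp : IsMinMonGen (sqfreePow (NIdeal K G) k) p) :
    ∃! M : Finset (Finset V), IsNMatching G k M ∧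
      p = ∏ F ∈ M, ∏ v ∈ F, (X v : MvPolynomial V K) := by
  classical
  obtain ⟨⟨d, rfl⟩, hmem, hnmin⟩ := hp
  set S₀ : Set (MvPolynomial V K) :=
    {p | ∃ F : Finset V, IsNFacet G F ∧ p = ∏ v ∈ F, X v} with hS₀def
  set S₁ : Set (MvPolynomial V K) :=
    {p | (∃ F : Finset V, p = ∏ v ∈ F, X v) ∧ p ∈ (NIdeal K G) ^ k} with hS₁def
  -- key minimality principle
  have key : ∀ e : V →₀ ℕ, e ≤ d →
      (monomial e 1 : MvPolynomial V K) ∈ sqfreePow (NIdeal K G) k → e = d := by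
    intro e hle hmem'
    by_contra hne
    apply hnmin
    have hx : ∃ x : V, e x < d x := by
      by_contra hcon
      push_neg at hcon
      exact hne (le_antisymm hle (Finsupp.le_def.2 hcon))
    obtain ⟨x, hx⟩ := hx
    have h1 : Finsupp.single x 1 ≤ d - e := by
      rw [Finsupp.single_le_iff, Finsupp.tsub_apply]
      omega
    have hdec : (monomial d 1 : MvPolynomial V K) =
        X x * (monomial (d - e - Finsupp.single x 1) 1 * monomial e 1) := by
      rw [X_eq_monomial, monomial_mul, monomial_mul, one_mul, one_mul]
      congr 1
      rw [← add_assoc, add_tsub_cancel_of_le h1, tsub_add_cancel_of_le hle]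
    rw [hdec]
    exact Ideal.mul_mem_mul (Ideal.subset_span ⟨x, rfl⟩) (Ideal.mul_mem_left _ _ hmem')
  -- step 1 : p itself is a squarefree monomial lying in I^k
  have hS₁mon : ∀ q ∈ S₁, ∃ e : V →₀ ℕ, q = monomial e 1 := by
    rintro q ⟨⟨F, rfl⟩, -⟩
    exact ⟨indF F, prodX_eq_monomial F⟩
  have hmem2 : (monomial d 1 : MvPolynomial V K) ∈ Ideal.span S₁ := hmem
  obtain ⟨e, hle, heS₁⟩ := dvd_of_monomial_mem_span hS₁mon hmem2
  have hed : e = d := key e hle (Ideal.subset_span heS₁)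
  rw [hed] at heS₁
  obtain ⟨⟨Fb, hFb⟩, hIk⟩ := heS₁
  have hdFb : d = indF Fb := by
    have := hFb.trans (prodX_eq_monomial Fb)
    exact monomial_left_injective (one_ne_zero) this
  have hd1 : ∀ x : V, d x ≤ 1 := fun x => by rw [hdFb]; exact indF_le_one Fb x
  -- step 2 : extract a product of k facets dividing (and equal to) p
  have hIk' : (monomial d 1 : MvPolynomial V K) ∈ Ideal.span (S₀ ^ k) := by
    rw [← span_pow_eq]
    exact hIk
  have hS₀mon : ∀ q ∈ S₀ ^ k, ∃ e : V →₀ ℕ, q = monomial e 1 := by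
    intro q hq
    obtain ⟨l, -, -, hql⟩ := mem_facetSet_pow hq
    exact ⟨_, hql⟩
  obtain ⟨E, hEd, hES⟩ := dvd_of_monomial_mem_span hS₀mon hIk'
  obtain ⟨l, hlcard, hlfac, hlq⟩ := mem_facetSet_pow hES
  have hE : E = (l.map indF).sum := monomial_left_injective one_ne_zero hlq
  have hEapp : ∀ x : V, E x = (l.map fun F => indF F x).sum := by
    intro x
    rw [hE, multiset_sum_apply, Multiset.map_map]
    rfl
  have hE1 : ∀ x : V, E x ≤ 1 := fun x => le_trans (Finsupp.le_def.1 hEd x) (hd1 x)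
  have hnodup : l.Nodup := by
    rw [Multiset.nodup_iff_count_le_one]
    intro F
    by_contra hcount
    push_neg at hcount
    have hFl : F ∈ l := Multiset.count_pos.1 (by omega)
    obtain ⟨u0, rfl, -⟩ := hlfac F hFl
    have hrep : Multiset.replicate 2 (closedNbhd G u0) ≤ l :=
      Multiset.le_count_iff_replicate_le.1 (by omega)
    obtain ⟨t, ht⟩ := Multiset.le_iff_exists_add.1 hrep
    have hl2 : l = closedNbhd G u0 ::ₘ closedNbhd G u0 ::ₘ t := by
      rw [ht]
      simp [Multiset.replicate_succ, Multiset.cons_add]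
    have h1 := hE1 u0
    rw [hEapp u0, hl2, Multiset.map_cons, Multiset.sum_cons, Multiset.map_cons,
      Multiset.sum_cons, indF_apply, if_pos (self_mem_closedNbhd u0)] at h1
    omega
  have hdisj : ∀ F ∈ l, ∀ F' ∈ l, F ≠ F' → Disjoint F F' := by
    intro F hF F' hF' hne
    rw [Finset.disjoint_left]
    intro x hxF hxF'
    obtain ⟨t, rfl⟩ := Multiset.exists_cons_of_mem hF
    have hF't : F' ∈ t := by
      rcases Multiset.mem_cons.1 hF' with h | h
      · exact (hne h.symm).elim
      · exact h
    obtain ⟨t2, rfl⟩ := Multiset.exists_cons_of_mem hF't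
    have h1 := hE1 x
    rw [hEapp x, Multiset.map_cons, Multiset.sum_cons, Multiset.map_cons,
      Multiset.sum_cons, indF_apply, if_pos hxF, indF_apply, if_pos hxF'] at h1
    omega
  set M : Finset (Finset V) := ⟨l, hnodup⟩ with hMdef
  have hMmem : ∀ F : Finset V, F ∈ M ↔ F ∈ l := fun F => Iff.rfl
  have hEsum : E = ∑ F ∈ M, indF F := hE
  have hMmatch : IsNMatching G k M :=
    ⟨hlcard, fun F hF => hlfac F hF, fun F hF F' hF' => hdisj F hF F' hF'⟩
  -- p equals the product over M
  have hcover : ∀ x : V, E x ≠ 0 ↔ ∃ F ∈ M, x ∈ F := by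
    intro x
    rw [hEsum]
    exact sum_indF_ne_zero_iff M x
  set F₁ : Finset V := Finset.univ.filter (fun x => ∃ F ∈ M, x ∈ F) with hF₁def
  have hEind : E = indF F₁ := by
    ext x
    rw [indF_apply]
    by_cases hx : x ∈ F₁
    · rw [if_pos hx]
      have h1 : E x ≠ 0 := (hcover x).2 (Finset.mem_filter.1 hx).2
      have h2 := hE1 x
      omega
    · rw [if_neg hx]
      by_contra h
      exact hx (Finset.mem_filter.2 ⟨Finset.mem_univ _, (hcover x).1 h⟩)
  have hgS₁ : (monomial E 1 : MvPolynomial V K) ∈ S₁ := by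
    refine ⟨⟨F₁, by rw [hEind, prodX_eq_monomial]⟩, ?_⟩
    show (monomial E 1 : MvPolynomial V K) ∈ (NIdeal K G) ^ k
    rw [show ((NIdeal K G : Ideal (MvPolynomial V K)) ^ k) = Ideal.span (S₀ ^ k) from
      span_pow_eq S₀ k]
    exact Ideal.subset_span hES
  have hEd2 : E = d := key E hEd (Ideal.subset_span hgS₁)
  have hprod : (∏ F ∈ M, ∏ v ∈ F, (X v : MvPolynomial V K)) = monomial d 1 := by
    rw [Finset.prod_congr rfl (fun F _ => prodX_eq_monomial (K := K) F),
      prod_monomial_one, ← hEsum, hEd2]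
  refine ⟨M, ⟨hMmatch, hprod.symm⟩, ?_⟩
  rintro M' ⟨hM'match, hM'eq⟩
  have hprod' : (∏ F ∈ M', ∏ v ∈ F, (X v : MvPolynomial V K)) =
      monomial (∑ F ∈ M', indF F) 1 := by
    rw [Finset.prod_congr rfl (fun F _ => prodX_eq_monomial (K := K) F), prod_monomial_one]
  have hsum' : (∑ F ∈ M', indF F) = ∑ F ∈ M, indF F := by
    have h1 : (monomial (∑ F ∈ M', indF F) (1 : K)) = monomial (∑ F ∈ M, indF F) 1 := by
      rw [← hprod', ← hM'eq, ← hEsum, hEd2]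
    exact monomial_left_injective one_ne_zero h1
  exact matchings_eq hT k M' M hM'match hMmatch hsum'
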